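/- Let (U, 𝒮) be a laminar set system, let S be a set of non-singleton members of 𝒮, and let (π, σ) be a pair of injections from S to U identifying S with unique request; set A = π(S) and B = σ(S). Then for every non-singleton member x ∈ 𝒮 with x ∉ S, exactly one of the following holds: (1) x is not s-requested in (π, σ) for any s ∈ S, and for every child c of x, |A ∩ c| = |B ∩ c|; or (2) x is s-requested in (π, σ) for some s ∈ S, and there exists a single leaf z ∈ (A ∪ B) ∩ x such that for every child c of x, |(A ∖ {z}) ∩ c| = |(B ∖ {z}) ∩ c|. -/
import Mathlib


variable {α : Type*} [DecidableEq α] [Fintype α]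

/-- A set system on the finite universe `α`: `∅ ∉ 𝒮`, `univ ∈ 𝒮`, all singletons in `𝒮`. -/
def IsSetSystem (𝒮 : Finset (Finset α)) : Prop :=
  (∅ : Finset α) ∉ 𝒮 ∧ Finset.univ ∈ 𝒮 ∧ ∀ a : α, ({a} : Finset α) ∈ 𝒮

/-- Two sets overlap: non-disjoint and neither contains the other. -/
def Overlap (X Y : Finset α) : Prop :=
  (X ∩ Y).Nonempty ∧ ¬ X ⊆ Y ∧ ¬ Y ⊆ X

/-- A set system is laminar when no two members overlap. -/
def IsLaminar (𝒮 : Finset (Finset α)) : Prop :=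
  ∀ X ∈ 𝒮, ∀ Y ∈ 𝒮, ¬ Overlap X Y

/-- `c` is a child of `x` in the laminar tree: a ⊆-maximal proper subset of `x` in `𝒮`. -/
def IsChild (𝒮 : Finset (Finset α)) (c x : Finset α) : Prop :=
  c ∈ 𝒮 ∧ c ⊂ x ∧ ∀ y ∈ 𝒮, y ⊂ x → c ⊆ y → y = c

/-- `p` is the parent of `x`: the ⊆-minimal member of `𝒮` properly containing `x`. -/
def IsParent (𝒮 : Finset (Finset α)) (p x : Finset α) : Prop :=
  p ∈ 𝒮 ∧ x ⊂ p ∧ ∀ y ∈ 𝒮, x ⊂ y → p ⊆ y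

/-- `(π, σ)` identifies `S`: a pair of injections on `S` such that each `s ∈ S` is the
⊆-minimal member of `𝒮` containing both `π s` and `σ s`. -/
def Identifies (𝒮 S : Finset (Finset α)) (π σ : Finset α → α) : Prop :=
  Set.InjOn π ↑S ∧ Set.InjOn σ ↑S ∧
  ∀ s ∈ S, π s ∈ s ∧ σ s ∈ s ∧ ∀ y ∈ 𝒮, π s ∈ y → σ s ∈ y → s ⊆ y

/-- `x` is `s`-requested in `(π, σ)` (for `s ∈ S`): `x ⊆ s` and `π s ∈ x` or `σ s ∈ x`. -/
def Requested (S : Finset (Finset α)) (π σ : Finset α → α) (s x : Finset α) : Prop :=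
  s ∈ S ∧ x ⊆ s ∧ (π s ∈ x ∨ σ s ∈ x)

/-- `(π, σ)` has unique request: every member of `𝒮` is `s`-requested for at most one `s ∈ S`. -/
def UniqueRequest (𝒮 S : Finset (Finset α)) (π σ : Finset α → α) : Prop :=
  ∀ x ∈ 𝒮, ∀ s s' : Finset α,
    Requested S π σ s x → Requested S π σ s' x → s = s'

/-- The bi-colouring `(A, B)` (disjoint, equal cardinality) identifies `S`. -/
def BicolIdentifies (𝒮 S : Finset (Finset α)) (A B : Finset α) : Prop :=
  Disjoint A B ∧ A.card = B.card ∧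
  ∃ π σ : Finset α → α, Identifies 𝒮 S π σ ∧ UniqueRequest 𝒮 S π σ ∧
    S.image π = A ∧ S.image σ = B

/-- `X` is a thin set of inner nodes: for every non-root `x ∈ X`, the parent of `x` is not
in `X` and `x` has a sibling not in `X`. -/
def Thin (𝒮 X : Finset (Finset α)) : Prop :=
  ∀ x ∈ X, x ≠ Finset.univ →
    (∀ p : Finset α, IsParent 𝒮 p x → p ∉ X) ∧
    ∃ y p : Finset α, y ≠ x ∧ IsChild 𝒮 x p ∧ IsChild 𝒮 y p ∧ y ∉ X

/-- For a non-singleton member `x ∉ S`, exactly one of the following holds: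
(1) `x` is not requested and `|A ∩ c| = |B ∩ c|` for every child `c` of `x`; or
(2) `x` is requested and there is a single leaf `z ∈ (A ∪ B) ∩ x` such that
`|(A ∖ {z}) ∩ c| = |(B ∖ {z}) ∩ c|` for every child `c` of `x`. -/
lemma lam_step {𝒮 : Finset (Finset α)} (hlam : IsLaminar 𝒮)
    {c s : Finset α} (hc : c ∈ 𝒮) (hs : s ∈ 𝒮) {a : α} (has : a ∈ s) (hac : a ∈ c) :
    s ⊆ c ∨ c ⊆ s := by
  have h := hlam s hs c hc
  unfold Overlap at h
  push_neg at h
  by_cases h1 : s ⊆ c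
  · exact Or.inl h1
  · exact Or.inr (h ⟨a, Finset.mem_inter.2 ⟨has, hac⟩⟩ h1)

lemma child_step {𝒮 : Finset (Finset α)} (hlam : IsLaminar 𝒮)
    {c x s : Finset α} (hx : x ∈ 𝒮) (hc : IsChild 𝒮 c x) (hs : s ∈ 𝒮)
    {e : α} (hes : e ∈ s) (hec : e ∈ c) : s ⊆ c ∨ x ⊆ s := by
  rcases lam_step hlam hc.1 hs hes hec with h | h
  · exact Or.inl h
  · by_cases hxs : x ⊆ s
    · exact Or.inr hxs
    · have hex : e ∈ x := hc.2.1.subset hec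
      rcases lam_step hlam hx hs hes hex with h2 | h2
      · have hsx : s ⊂ x := lt_of_le_of_ne h2 (by rintro rfl; exact hxs le_rfl)
        exact Or.inl ((hc.2.2 s hs hsx h).le)
      · exact Or.inr h2

lemma key_noreq {𝒮 S : Finset (Finset α)} (hlam : IsLaminar 𝒮)
    (hS : ∀ x ∈ S, x ∈ 𝒮 ∧ ∀ a : α, x ≠ {a})
    {π σ : Finset α → α} (hid : Identifies 𝒮 S π σ)
    {x : Finset α} (hx : x ∈ 𝒮) (hne : ¬ ∃ s : Finset α, Requested S π σ s x)
    {c : Finset α} (hc : IsChild 𝒮 c x) :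
    (S.image π ∩ c).card = (S.image σ ∩ c).card := by
  have hcx : c ⊆ x := hc.2.1.subset
  have hA' : S.image π ∩ c = (S.filter (· ⊆ c)).image π := by
    ext a
    simp only [Finset.mem_inter, Finset.mem_image, Finset.mem_filter]
    constructor
    · rintro ⟨⟨s, hsS, rfl⟩, hac⟩
      refine ⟨s, ⟨hsS, ?_⟩, rfl⟩
      rcases child_step hlam hx hc (hS s hsS).1 (hid.2.2 s hsS).1 hac with h | h
      · exact h
      · exact absurd ⟨s, hsS, h, Or.inl (hcx hac)⟩ hne
    · rintro ⟨s, ⟨hsS, hsc⟩, rfl⟩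
      exact ⟨⟨s, hsS, rfl⟩, hsc (hid.2.2 s hsS).1⟩
  have hB' : S.image σ ∩ c = (S.filter (· ⊆ c)).image σ := by
    ext a
    simp only [Finset.mem_inter, Finset.mem_image, Finset.mem_filter]
    constructor
    · rintro ⟨⟨s, hsS, rfl⟩, hac⟩
      refine ⟨s, ⟨hsS, ?_⟩, rfl⟩
      rcases child_step hlam hx hc (hS s hsS).1 (hid.2.2 s hsS).2.1 hac with h | h
      · exact h
      · exact absurd ⟨s, hsS, h, Or.inr (hcx hac)⟩ hne
    · rintro ⟨s, ⟨hsS, hsc⟩, rfl⟩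
      exact ⟨⟨s, hsS, rfl⟩, hsc (hid.2.2 s hsS).2.1⟩
  have hsub : ↑(S.filter (· ⊆ c)) ⊆ (↑S : Set (Finset α)) :=
    Finset.coe_subset.2 (Finset.filter_subset _ _)
  rw [hA', hB', Finset.card_image_of_injOn (hid.1.mono hsub),
    Finset.card_image_of_injOn (hid.2.1.mono hsub)]

lemma key_req {𝒮 S : Finset (Finset α)} (hlam : IsLaminar 𝒮)
    (hS : ∀ x ∈ S, x ∈ 𝒮 ∧ ∀ a : α, x ≠ {a})
    {π σ : Finset α → α} (hid : Identifies 𝒮 S π σ) (hur : UniqueRequest 𝒮 S π σ)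
    {x : Finset α} (hx : x ∈ 𝒮)
    {s₀ : Finset α} (hs₀ : s₀ ∈ S) (hxs₀ : x ⊆ s₀) (hz : π s₀ ∈ x) (hσn : σ s₀ ∉ x)
    {c : Finset α} (hc : IsChild 𝒮 c x) :
    ((S.image π \ {π s₀}) ∩ c).card = ((S.image σ \ {π s₀}) ∩ c).card := by
  have hcx : c ⊆ x := hc.2.1.subset
  have hreqx : Requested S π σ s₀ x := ⟨hs₀, hxs₀, Or.inl hz⟩
  have hA' : (S.image π \ {π s₀}) ∩ c = (S.filter (· ⊆ c)).image π := by
    ext a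
    simp only [Finset.mem_inter, Finset.mem_sdiff, Finset.mem_image, Finset.mem_singleton,
      Finset.mem_filter]
    constructor
    · rintro ⟨⟨⟨s, hsS, rfl⟩, hne⟩, hac⟩
      refine ⟨s, ⟨hsS, ?_⟩, rfl⟩
      rcases child_step hlam hx hc (hS s hsS).1 (hid.2.2 s hsS).1 hac with h | h
      · exact h
      · exact absurd (congrArg π (hur x hx s s₀ ⟨hsS, h, Or.inl (hcx hac)⟩ hreqx)) hne
    · rintro ⟨s, ⟨hsS, hsc⟩, rfl⟩
      refine ⟨⟨⟨s, hsS, rfl⟩, ?_⟩, hsc (hid.2.2 s hsS).1⟩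
      intro h
      have : s = s₀ := hid.1 (Finset.mem_coe.2 hsS) (Finset.mem_coe.2 hs₀) h
      subst this
      exact hc.2.1.not_subset (hxs₀.trans hsc)
  have hB' : (S.image σ \ {π s₀}) ∩ c = (S.filter (· ⊆ c)).image σ := by
    ext a
    simp only [Finset.mem_inter, Finset.mem_sdiff, Finset.mem_image, Finset.mem_singleton,
      Finset.mem_filter]
    constructor
    · rintro ⟨⟨⟨s, hsS, rfl⟩, hne⟩, hac⟩
      refine ⟨s, ⟨hsS, ?_⟩, rfl⟩
      rcases child_step hlam hx hc (hS s hsS).1 (hid.2.2 s hsS).2.1 hac with h | h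
      · exact h
      · have : s = s₀ := hur x hx s s₀ ⟨hsS, h, Or.inr (hcx hac)⟩ hreqx
        subst this
        exact absurd (hcx hac) hσn
    · rintro ⟨s, ⟨hsS, hsc⟩, rfl⟩
      refine ⟨⟨⟨s, hsS, rfl⟩, ?_⟩, hsc (hid.2.2 s hsS).2.1⟩
      intro h
      have hreq1 : Requested S π σ s s := ⟨hsS, le_rfl, Or.inr (hid.2.2 s hsS).2.1⟩
      have hreq2 : Requested S π σ s₀ s :=
        ⟨hs₀, (hsc.trans hcx).trans hxs₀, Or.inl (h ▸ (hid.2.2 s hsS).2.1)⟩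
      have : s = s₀ := hur s (hS s hsS).1 s s₀ hreq1 hreq2
      subst this
      exact hc.2.1.not_subset (hxs₀.trans hsc)
  have hsub : ↑(S.filter (· ⊆ c)) ⊆ (↑S : Set (Finset α)) :=
    Finset.coe_subset.2 (Finset.filter_subset _ _)
  rw [hA', hB', Finset.card_image_of_injOn (hid.1.mono hsub),
    Finset.card_image_of_injOn (hid.2.1.mono hsub)]

lemma identifies_swap {𝒮 S : Finset (Finset α)} {π σ : Finset α → α}
    (hid : Identifies 𝒮 S π σ) : Identifies 𝒮 S σ π :=
  ⟨hid.2.1, hid.1, fun s hs =>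
    ⟨(hid.2.2 s hs).2.1, (hid.2.2 s hs).1, fun y hy h1 h2 => (hid.2.2 s hs).2.2 y hy h2 h1⟩⟩

lemma uniquereq_swap {𝒮 S : Finset (Finset α)} {π σ : Finset α → α}
    (hur : UniqueRequest 𝒮 S π σ) : UniqueRequest 𝒮 S σ π :=
  fun y hy s s' h h' =>
    hur y hy s s' ⟨h.1, h.2.1, h.2.2.symm⟩ ⟨h'.1, h'.2.1, h'.2.2.symm⟩

theorem stmt_8 (𝒮 : Finset (Finset α)) (hsys : IsSetSystem 𝒮) (hlam : IsLaminar 𝒮)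
    (S : Finset (Finset α)) (hS : ∀ x ∈ S, x ∈ 𝒮 ∧ ∀ a : α, x ≠ {a})
    (π σ : Finset α → α) (hid : Identifies 𝒮 S π σ) (hur : UniqueRequest 𝒮 S π σ)
    (A B : Finset α) (hA : A = S.image π) (hB : B = S.image σ)
    (x : Finset α) (hx : x ∈ 𝒮) (hns : ∀ a : α, x ≠ {a}) (hxS : x ∉ S) :
    Xor'
      ((¬ ∃ s : Finset α, Requested S π σ s x) ∧
        ∀ c : Finset α, IsChild 𝒮 c x → (A ∩ c).card = (B ∩ c).card)
      ((∃ s : Finset α, Requested S π σ s x) ∧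
        ∃ z ∈ (A ∪ B) ∩ x,
          ∀ c : Finset α, IsChild 𝒮 c x →
            ((A \ {z}) ∩ c).card = ((B \ {z}) ∩ c).card) := by
  subst hA hB
  by_cases hreq : ∃ s : Finset α, Requested S π σ s x
  · obtain ⟨s₀, hs₀S, hxs, hor⟩ := hreq
    have hboth : ¬ (π s₀ ∈ x ∧ σ s₀ ∈ x) := by
      rintro ⟨h1, h2⟩
      exact hxS (by rw [Finset.Subset.antisymm hxs ((hid.2.2 s₀ hs₀S).2.2 x hx h1 h2)]; exact hs₀S)
    refine Or.inr ⟨⟨⟨s₀, hs₀S, hxs, hor⟩, ?_⟩, fun h => h.1 ⟨s₀, hs₀S, hxs, hor⟩⟩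
    rcases hor with h1 | h1
    · have h2 : σ s₀ ∉ x := fun h => hboth ⟨h1, h⟩
      exact ⟨π s₀, Finset.mem_inter.2
          ⟨Finset.mem_union_left _ (Finset.mem_image_of_mem π hs₀S), h1⟩,
        fun c hc => key_req hlam hS hid hur hx hs₀S hxs h1 h2 hc⟩
    · have h2 : π s₀ ∉ x := fun h => hboth ⟨h, h1⟩
      exact ⟨σ s₀, Finset.mem_inter.2
          ⟨Finset.mem_union_right _ (Finset.mem_image_of_mem σ hs₀S), h1⟩,
        fun c hc =>
          (key_req hlam hS (identifies_swap hid) (uniquereq_swap hur) hx hs₀S hxs h1 h2 hc).symm⟩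
  · exact Or.inl ⟨⟨hreq, fun c hc => key_noreq hlam hS hid hx hreq hc⟩, fun h => hreq h.1⟩
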